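/- Let L(θ₀, ν) be the 5×5 bracket matrix of the elastic microswimmer (as defined with entries depending on sin θ₀, cos θ₀, and polynomial expressions in ν). Then det L(θ₀, ν) is independent of θ₀. -/

import Mathlib

open Real Matrix

set_option maxHeartbeats 1000000 in
/-- the determinant of the 5×5 bracket matrix L(θ₀, ν) of the
elastic microswimmer does not depend on the orientation θ₀. -/
theorem stmt10 (ν : ℝ)
    (a b c d : ℝ) (ha : a = -96/5) (hb : b = -66/5) (hc : c = 42/5) (hd : d = -24/5)
    (la lb lc ld : ℝ)
    (hla : la = (57/7) * c - (21/5) * a * ν - 54 * d * ν^2)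
    (hlb : lb = -(18/5) * b + (3/2) * a * b * ν^2)
    (hlc : lc = -9 * a + (3/2) * a * b * ν + 3 * a * d * ν^2)
    (hld : ld = -(39/4) * c * d + 3 * a * d * ν + (183/4) * d^2 * ν^2)
    (L : ℝ → Matrix (Fin 5) (Fin 5) ℝ)
    (hL : L = fun θ₀ => (-ν) •
      !![sin θ₀, -cos θ₀, c, a, b;
         -sin θ₀, cos θ₀, c, b, a;
         12 * (ν - 1) * cos θ₀, 12 * (ν - 1) * sin θ₀, 0, 0, 0;
         -ν * la * sin θ₀, ν * la * cos θ₀, -ν * lb, -ν * lc, ν * ld;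
         -ν * la * sin θ₀, ν * la * cos θ₀, -ν * lb, -ν * ld, ν * lc]) :
    ∀ θ₀ θ₀' : ℝ, (L θ₀).det = (L θ₀').det := by
  have M0 : Matrix (Fin 5) (Fin 5) ℝ :=
    !![0, -1, c, a, b; 0, 1, c, b, a; 12*(ν-1), 0, 0, 0, 0;
       0, ν*la, -ν*lb, -ν*lc, ν*ld; 0, ν*la, -ν*lb, -ν*ld, ν*lc]
  have key : ∀ θ : ℝ,
      (!![sin θ, -cos θ, c, a, b;
         -sin θ, cos θ, c, b, a;
         12 * (ν - 1) * cos θ, 12 * (ν - 1) * sin θ, 0, 0, 0;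
         -ν * la * sin θ, ν * la * cos θ, -ν * lb, -ν * lc, ν * ld;
         -ν * la * sin θ, ν * la * cos θ, -ν * lb, -ν * ld, ν * lc] :
         Matrix (Fin 5) (Fin 5) ℝ).det =
      (!![0, -1, c, a, b; 0, 1, c, b, a; 12*(ν-1), 0, 0, 0, 0;
         0, ν*la, -ν*lb, -ν*lc, ν*ld; 0, ν*la, -ν*lb, -ν*ld, ν*lc] :
         Matrix (Fin 5) (Fin 5) ℝ).det := by
    intro θ
    set R : Matrix (Fin 5) (Fin 5) ℝ :=
      !![cos θ, sin θ, 0, 0, 0; -sin θ, cos θ, 0, 0, 0;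
         0, 0, 1, 0, 0; 0, 0, 0, 1, 0; 0, 0, 0, 0, 1] with hR
    have hfac :
        (!![sin θ, -cos θ, c, a, b;
           -sin θ, cos θ, c, b, a;
           12 * (ν - 1) * cos θ, 12 * (ν - 1) * sin θ, 0, 0, 0;
           -ν * la * sin θ, ν * la * cos θ, -ν * lb, -ν * lc, ν * ld;
           -ν * la * sin θ, ν * la * cos θ, -ν * lb, -ν * ld, ν * lc] :
           Matrix (Fin 5) (Fin 5) ℝ) =
        (!![0, -1, c, a, b; 0, 1, c, b, a; 12*(ν-1), 0, 0, 0, 0;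
           0, ν*la, -ν*lb, -ν*lc, ν*ld; 0, ν*la, -ν*lb, -ν*ld, ν*lc] :
           Matrix (Fin 5) (Fin 5) ℝ) * R := by
      ext i j
      fin_cases i <;> fin_cases j <;>
        simp [hR, Matrix.mul_apply, Fin.sum_univ_five, Matrix.vecHead, Matrix.vecTail,
          Matrix.cons_val_zero, Matrix.cons_val_one, Matrix.head_cons] <;> ring
    have hdetR : R.det = 1 := by
      have h := sin_sq_add_cos_sq θ
      simp [hR, Matrix.det_succ_row_zero, Fin.sum_univ_succ, Fin.succAbove]
      linear_combination h
    rw [hfac, Matrix.det_mul, hdetR, mul_one]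
  intro θ θ'
  rw [hL]
  simp only [Matrix.det_smul, Fintype.card_fin]
  rw [key θ, key θ']
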